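/- arXiv:2507.19531 — 2 statements merged into one kernel-verified Lean document; each statement's English description precedes it below -/
import Mathlib

section
/- Let P be a symmetric positive semidefinite m×m matrix satisfying the discrete algebraic Riccati equation P = AᵀPA + Q − AᵀPB(BᵀPB + R)⁻¹BᵀPA, and let K = −(R + BᵀPB)⁻¹BᵀPA. Then for every x ∈ ℝ^m and every u ∈ ℝ^n, xᵀQx + uᵀRu + (Ax + Bu)ᵀP(Ax + Bu) ≥ xᵀPx, with equality if and only if u = Kx. -/
open Matrix

private lemma rbi_flip {a b : ℕ} (M : Matrix (Fin a) (Fin b) ℝ) (x : Fin a → ℝ) (y : Fin b → ℝ) :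
    x ⬝ᵥ M.mulVec y = y ⬝ᵥ Mᵀ.mulVec x := by
  rw [dotProduct_mulVec, mulVec_transpose, dotProduct_comm]

private lemma rbi_quad {a b c : ℕ} (M : Matrix (Fin a) (Fin b) ℝ) (N : Matrix (Fin a) (Fin c) ℝ)
    (x : Fin b → ℝ) (y : Fin c → ℝ) :
    M.mulVec x ⬝ᵥ N.mulVec y = x ⬝ᵥ (Mᵀ * N).mulVec y := by
  rw [rbi_flip, mulVec_mulVec, rbi_flip, transpose_mul, transpose_transpose]

private lemma rbi_key {m n : ℕ}
    (A : Matrix (Fin m) (Fin m) ℝ) (B : Matrix (Fin m) (Fin n) ℝ)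
    (Q : Matrix (Fin m) (Fin m) ℝ) (R : Matrix (Fin n) (Fin n) ℝ)
    (P : Matrix (Fin m) (Fin m) ℝ)
    (hR : R.PosDef) (hP : P.PosSemidef)
    (hRic : P = Aᵀ * P * A + Q - Aᵀ * P * B * (Bᵀ * P * B + R)⁻¹ * (Bᵀ * P * A))
    (K : Matrix (Fin n) (Fin m) ℝ)
    (hK : K = -((R + Bᵀ * P * B)⁻¹ * (Bᵀ * P * A)))
    (x : Fin m → ℝ) (u : Fin n → ℝ) :
    x ⬝ᵥ Q.mulVec x + u ⬝ᵥ R.mulVec u +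
          (A.mulVec x + B.mulVec u) ⬝ᵥ P.mulVec (A.mulVec x + B.mulVec u) - x ⬝ᵥ P.mulVec x
      = (u - K.mulVec x) ⬝ᵥ (R + Bᵀ * P * B).mulVec (u - K.mulVec x) := by
  set S := R + Bᵀ * P * B with hSdef
  have hPt : Pᵀ = P := Matrix.IsSymm.eq (by simpa using hP.1)
  have hBPB : (Bᵀ * P * B).PosSemidef := by simpa using hP.conjTranspose_mul_mul_same B
  have hS : S.PosDef := hR.add_posSemidef hBPB
  have hdet : IsUnit S.det := isUnit_iff_ne_zero.mpr hS.det_pos.ne'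
  have hSt : Sᵀ = S := Matrix.IsSymm.eq (by simpa using hS.posSemidef.1)
  have hinv : S * S⁻¹ = 1 := S.mul_nonsing_inv hdet
  have hcomm : Bᵀ * P * B + R = S := by rw [hSdef, add_comm]
  have hSK : S * K = -(Bᵀ * P * A) := by
    rw [hK]
    simp only [Matrix.mul_neg, ← Matrix.mul_assoc, hinv, Matrix.one_mul]
  have hKt : Kᵀ = -(Aᵀ * P * B * S⁻¹) := by
    rw [hK, transpose_neg, transpose_mul, transpose_nonsing_inv, hSt]
    simp only [transpose_mul, transpose_transpose, hPt, ← Matrix.mul_assoc]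
  have hM : Kᵀ * (S * K) = Aᵀ * P * B * (Bᵀ * P * B + R)⁻¹ * (Bᵀ * P * A) := by
    rw [hSK, hKt, hcomm]
    simp only [Matrix.neg_mul, Matrix.mul_neg, neg_neg, ← Matrix.mul_assoc]
  have hPx : x ⬝ᵥ P.mulVec x
      = x ⬝ᵥ Q.mulVec x + x ⬝ᵥ (Aᵀ * P * A).mulVec x - x ⬝ᵥ (Kᵀ * (S * K)).mulVec x := by
    rw [hM]
    conv_lhs => rw [hRic]
    simp only [sub_mulVec, add_mulVec, dotProduct_add, dotProduct_sub]
    ring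
  have e1 : (A.mulVec x + B.mulVec u) ⬝ᵥ P.mulVec (A.mulVec x + B.mulVec u)
      = x ⬝ᵥ (Aᵀ * P * A).mulVec x + 2 * (u ⬝ᵥ (Bᵀ * P * A).mulVec x)
        + u ⬝ᵥ (Bᵀ * P * B).mulVec u := by
    simp only [mulVec_add, dotProduct_add, add_dotProduct, mulVec_mulVec, rbi_quad]
    rw [rbi_flip (Aᵀ * (P * B)) x u]
    simp only [transpose_mul, transpose_transpose, hPt, ← Matrix.mul_assoc]
    ring
  have e2 : (u - K.mulVec x) ⬝ᵥ S.mulVec (u - K.mulVec x)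
      = u ⬝ᵥ R.mulVec u + u ⬝ᵥ (Bᵀ * P * B).mulVec u + 2 * (u ⬝ᵥ (Bᵀ * P * A).mulVec x)
        + x ⬝ᵥ (Kᵀ * (S * K)).mulVec x := by
    simp only [mulVec_sub, dotProduct_sub, sub_dotProduct, mulVec_mulVec, rbi_quad]
    rw [rbi_flip (Kᵀ * S) x u]
    simp only [transpose_mul, transpose_transpose, hSt, hSK, Matrix.mul_neg, neg_mulVec,
      dotProduct_neg]
    rw [show S *ᵥ u = R *ᵥ u + (Bᵀ * P * B) *ᵥ u from by rw [hSdef, add_mulVec]]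
    simp only [dotProduct_add]
    ring
  rw [hPx, e1, e2]
  ring

/-- under the DARE, the one-step Bellman inequality
`xᵀQx + uᵀRu + (Ax+Bu)ᵀP(Ax+Bu) ≥ xᵀPx` holds for all `x, u`, with equality
iff `u = Kx`, where `K = -(R + BᵀPB)⁻¹ BᵀPA`. -/
theorem riccati_bellman_inequality {m n : ℕ}
    (A : Matrix (Fin m) (Fin m) ℝ) (B : Matrix (Fin m) (Fin n) ℝ)
    (Q : Matrix (Fin m) (Fin m) ℝ) (R : Matrix (Fin n) (Fin n) ℝ)
    (P : Matrix (Fin m) (Fin m) ℝ)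
    (hQ : Q.PosSemidef) (hR : R.PosDef) (hP : P.PosSemidef)
    (hRic : P = Aᵀ * P * A + Q - Aᵀ * P * B * (Bᵀ * P * B + R)⁻¹ * (Bᵀ * P * A))
    (K : Matrix (Fin n) (Fin m) ℝ)
    (hK : K = -((R + Bᵀ * P * B)⁻¹ * (Bᵀ * P * A))) :
    ∀ (x : Fin m → ℝ) (u : Fin n → ℝ),
      x ⬝ᵥ Q.mulVec x + u ⬝ᵥ R.mulVec u +
          (A.mulVec x + B.mulVec u) ⬝ᵥ P.mulVec (A.mulVec x + B.mulVec u) ≥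
        x ⬝ᵥ P.mulVec x ∧
      (x ⬝ᵥ Q.mulVec x + u ⬝ᵥ R.mulVec u +
          (A.mulVec x + B.mulVec u) ⬝ᵥ P.mulVec (A.mulVec x + B.mulVec u) =
        x ⬝ᵥ P.mulVec x ↔ u = K.mulVec x) := by
  intro x u
  have hBPB : (Bᵀ * P * B).PosSemidef := by simpa using hP.conjTranspose_mul_mul_same B
  have hS : (R + Bᵀ * P * B).PosDef := hR.add_posSemidef hBPB
  have hkey := rbi_key A B Q R P hR hP hRic K hK x u
  set v := u - K.mulVec x with hv
  have hnn : 0 ≤ v ⬝ᵥ (R + Bᵀ * P * B).mulVec v := by simpa using hS.posSemidef.dotProduct_mulVec_nonneg v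
  constructor
  · linarith [hkey, hnn]
  · constructor
    · intro h
      by_contra hne
      have hvne : v ≠ 0 := sub_ne_zero.mpr hne
      have hpos : 0 < v ⬝ᵥ (R + Bᵀ * P * B).mulVec v := by simpa using hS.dotProduct_mulVec_pos hvne
      linarith [hkey]
    · intro h
      have hv0 : v = 0 := by rw [hv, h, sub_self]
      have : v ⬝ᵥ (R + Bᵀ * P * B).mulVec v = 0 := by rw [hv0]; simp
      linarith [hkey]
end

section
/- Let P be a symmetric positive semidefinite m×m matrix satisfying the discrete algebraic Riccati equation P = AᵀPA + Q − AᵀPB(BᵀPB + R)⁻¹BᵀPA, and let K = −(R + BᵀPB)⁻¹BᵀPA. Then for every x_0 ∈ ℝ^m and every input sequence u_0, …, u_{N−1} ∈ ℝ^n with states x_{k+1} = A x_k + B u_k, the MPC cost satisfies J(x_0, u) = Σ_{k=0}^{N−1}(x_kᵀQx_k + u_kᵀRu_k) + x_NᵀPx_N ≥ x_0ᵀPx_0, and the linear-feedback sequence u_k = K x_k (i.e. x_k = (A + BK)^k x_0) achieves J(x_0, u) = x_0ᵀPx_0 exactly; hence the linear feedback sequence is optimal for the MPC cost, and in particular the optimal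 MPC law satisfies κ_MPC(x_0) = K x_0 whenever this sequence is feasible. -/
open Matrix

private lemma dp_swap {m n : ℕ} (M : Matrix (Fin m) (Fin n) ℝ) (a : Fin m → ℝ) (b : Fin n → ℝ) :
    a ⬝ᵥ M.mulVec b = Mᵀ.mulVec a ⬝ᵥ b := by
  rw [dotProduct_mulVec, ← mulVec_transpose]

/-- under the DARE, the horizon-`N` MPC cost with terminal cost
`x_NᵀPx_N` is bounded below by `x₀ᵀPx₀` for every input sequence, and the
linear-feedback sequence `u_k = K x_k` (so `x_k = (A+BK)^k x₀`) achieves this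
bound exactly; hence the linear feedback sequence is optimal for the MPC cost. -/
theorem linearFeedback_optimal_for_MPC_cost {m n : ℕ}
    (A : Matrix (Fin m) (Fin m) ℝ) (B : Matrix (Fin m) (Fin n) ℝ)
    (Q : Matrix (Fin m) (Fin m) ℝ) (R : Matrix (Fin n) (Fin n) ℝ)
    (P : Matrix (Fin m) (Fin m) ℝ)
    (hQ : Q.PosSemidef) (hR : R.PosDef) (hP : P.PosSemidef)
    (hRic : P = Aᵀ * P * A + Q - Aᵀ * P * B * (Bᵀ * P * B + R)⁻¹ * (Bᵀ * P * A))
    (K : Matrix (Fin n) (Fin m) ℝ)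
    (hK : K = -((R + Bᵀ * P * B)⁻¹ * (Bᵀ * P * A)))
    (N : ℕ) (hN : 1 ≤ N) (x0 : Fin m → ℝ) :
    (∀ (x : ℕ → Fin m → ℝ) (u : ℕ → Fin n → ℝ), x 0 = x0 →
      (∀ k, x (k + 1) = A.mulVec (x k) + B.mulVec (u k)) →
      (∑ k ∈ Finset.range N,
          (x k ⬝ᵥ Q.mulVec (x k) + u k ⬝ᵥ R.mulVec (u k))) +
          x N ⬝ᵥ P.mulVec (x N) ≥ x0 ⬝ᵥ P.mulVec x0) ∧
    ((∑ k ∈ Finset.range N,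
        (((A + B * K) ^ k).mulVec x0 ⬝ᵥ Q.mulVec (((A + B * K) ^ k).mulVec x0) +
          K.mulVec (((A + B * K) ^ k).mulVec x0) ⬝ᵥ
            R.mulVec (K.mulVec (((A + B * K) ^ k).mulVec x0)))) +
        ((A + B * K) ^ N).mulVec x0 ⬝ᵥ P.mulVec (((A + B * K) ^ N).mulVec x0) =
      x0 ⬝ᵥ P.mulVec x0) := by
  set S : Matrix (Fin n) (Fin n) ℝ := R + Bᵀ * P * B with hSdef
  have hBPB : (Bᵀ * P * B).PosSemidef := by simpa using hP.conjTranspose_mul_mul_same B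
  have hS : S.PosDef := hR.add_posSemidef hBPB
  have hSsymm : Sᵀ = S := hS.isHermitian
  have hSinv : S * S⁻¹ = 1 :=
    mul_nonsing_inv S ((Matrix.isUnit_iff_isUnit_det S).mp hS.isUnit)
  have hPsymm : Pᵀ = P := hP.isHermitian
  have hcomm : Bᵀ * P * B + R = S := by rw [hSdef, add_comm]
  have h1 : Aᵀ * P * A + Q = P + Aᵀ * P * B * S⁻¹ * (Bᵀ * P * A) := by
    rw [hcomm] at hRic
    exact (eq_sub_iff_add_eq.mp hRic).symm
  -- key one-step identity
  have key : ∀ (x : Fin m → ℝ) (u : Fin n → ℝ),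
      x ⬝ᵥ Q.mulVec x + u ⬝ᵥ R.mulVec u +
        (A.mulVec x + B.mulVec u) ⬝ᵥ P.mulVec (A.mulVec x + B.mulVec u)
      = x ⬝ᵥ P.mulVec x + (u - K.mulVec x) ⬝ᵥ S.mulVec (u - K.mulVec x) := by
    intro x u
    set c : Fin n → ℝ := (Bᵀ * P * A).mulVec x with hc
    have hKx : K.mulVec x = -(S⁻¹.mulVec c) := by
      rw [hK, neg_mulVec, ← mulVec_mulVec]
    have hScKx : S.mulVec (K.mulVec x) = -c := by
      rw [hKx, mulVec_neg, mulVec_mulVec, hSinv, one_mulVec]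
    have e1 : (A.mulVec x + B.mulVec u) ⬝ᵥ P.mulVec (A.mulVec x + B.mulVec u)
        = x ⬝ᵥ (Aᵀ * P * A).mulVec x + 2 * (u ⬝ᵥ c)
          + u ⬝ᵥ (Bᵀ * P * B).mulVec u := by
      have t1 : x ⬝ᵥ (Aᵀ * P * A).mulVec x
          = (A.mulVec x) ⬝ᵥ P.mulVec (A.mulVec x) := by
        rw [← mulVec_mulVec, ← mulVec_mulVec, dp_swap, transpose_transpose]
      have t2 : u ⬝ᵥ (Bᵀ * P * B).mulVec u
          = (B.mulVec u) ⬝ᵥ P.mulVec (B.mulVec u) := by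
        rw [← mulVec_mulVec, ← mulVec_mulVec, dp_swap, transpose_transpose]
      have t3 : (B.mulVec u) ⬝ᵥ P.mulVec (A.mulVec x) = u ⬝ᵥ c := by
        rw [hc, ← mulVec_mulVec, ← mulVec_mulVec, dp_swap Bᵀ u, transpose_transpose]
      have t4 : (A.mulVec x) ⬝ᵥ P.mulVec (B.mulVec u) = u ⬝ᵥ c := by
        rw [dp_swap, hPsymm, dotProduct_comm, t3]
      rw [mulVec_add, dotProduct_add, add_dotProduct, add_dotProduct, t1, t2, t3, t4]
      ring
    have e2 : x ⬝ᵥ (Aᵀ * P * A).mulVec x + x ⬝ᵥ Q.mulVec x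
        = x ⬝ᵥ P.mulVec x + (S⁻¹.mulVec c) ⬝ᵥ c := by
      have := congrArg (fun M : Matrix (Fin m) (Fin m) ℝ => x ⬝ᵥ M.mulVec x) h1
      simp only [add_mulVec, dotProduct_add] at this
      rw [this]
      congr 1
      have hT : (Aᵀ * P * B)ᵀ = Bᵀ * P * A := by
        simp [Matrix.transpose_mul, hPsymm, Matrix.mul_assoc]
      calc x ⬝ᵥ (Aᵀ * P * B * S⁻¹ * (Bᵀ * P * A)).mulVec x
          = x ⬝ᵥ (Aᵀ * P * B).mulVec (S⁻¹.mulVec c) := by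
            rw [hc, mulVec_mulVec, mulVec_mulVec, Matrix.mul_assoc, Matrix.mul_assoc,
              Matrix.mul_assoc]
        _ = (Bᵀ * P * A).mulVec x ⬝ᵥ (S⁻¹.mulVec c) := by rw [dp_swap, hT]
        _ = (S⁻¹.mulVec c) ⬝ᵥ c := by rw [← hc, dotProduct_comm]
    have e3 : (u - K.mulVec x) ⬝ᵥ S.mulVec (u - K.mulVec x)
        = u ⬝ᵥ S.mulVec u + 2 * (u ⬝ᵥ c) + (S⁻¹.mulVec c) ⬝ᵥ c := by
      have t5 : (K.mulVec x) ⬝ᵥ S.mulVec u = -(u ⬝ᵥ c) := by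
        rw [dp_swap, hSsymm, hScKx, neg_dotProduct, dotProduct_comm]
      have t6 : u ⬝ᵥ S.mulVec (K.mulVec x) = -(u ⬝ᵥ c) := by
        rw [hScKx, dotProduct_neg]
      have t7 : (K.mulVec x) ⬝ᵥ S.mulVec (K.mulVec x) = (S⁻¹.mulVec c) ⬝ᵥ c := by
        rw [hScKx, hKx, neg_dotProduct, dotProduct_neg, neg_neg]
      rw [mulVec_sub, dotProduct_sub, sub_dotProduct, sub_dotProduct, t5, t6, t7]
      ring
    have e4 : u ⬝ᵥ S.mulVec u = u ⬝ᵥ R.mulVec u + u ⬝ᵥ (Bᵀ * P * B).mulVec u := by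
      rw [hSdef, add_mulVec, dotProduct_add]
    linarith
  have keynn : ∀ (v : Fin n → ℝ), 0 ≤ v ⬝ᵥ S.mulVec v := fun v => by
    simpa using hS.posSemidef.dotProduct_mulVec_nonneg v
  constructor
  · intro x u hx0 hrec
    have main : ∀ M : ℕ,
        (∑ k ∈ Finset.range M, (x k ⬝ᵥ Q.mulVec (x k) + u k ⬝ᵥ R.mulVec (u k))) +
          x M ⬝ᵥ P.mulVec (x M) ≥ x0 ⬝ᵥ P.mulVec x0 := by
      intro M
      induction M with
      | zero => simp [hx0]
      | succ M ih =>
        rw [Finset.sum_range_succ]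
        have hk := key (x M) (u M)
        rw [← hrec M] at hk
        have := keynn (u M - K.mulVec (x M))
        linarith
    exact main N
  · have main : ∀ M : ℕ,
        (∑ k ∈ Finset.range M,
          (((A + B * K) ^ k).mulVec x0 ⬝ᵥ Q.mulVec (((A + B * K) ^ k).mulVec x0) +
            K.mulVec (((A + B * K) ^ k).mulVec x0) ⬝ᵥ
              R.mulVec (K.mulVec (((A + B * K) ^ k).mulVec x0)))) +
          ((A + B * K) ^ M).mulVec x0 ⬝ᵥ P.mulVec (((A + B * K) ^ M).mulVec x0)
        = x0 ⬝ᵥ P.mulVec x0 := by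
      intro M
      induction M with
      | zero => simp
      | succ M ih =>
        set xk : Fin m → ℝ := ((A + B * K) ^ M).mulVec x0 with hxk
        have hstep : ((A + B * K) ^ (M + 1)).mulVec x0
            = A.mulVec xk + B.mulVec (K.mulVec xk) := by
          rw [pow_succ', ← mulVec_mulVec, ← hxk, add_mulVec, ← mulVec_mulVec]
        have hk := key xk (K.mulVec xk)
        rw [sub_self, zero_dotProduct] at hk
        rw [Finset.sum_range_succ, hstep, ← hxk]
        linarith
    exact main N
end
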